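/- With the notation of the context, the tilted class 𝒟_υ^{≤0} is closed under cofibers and under extensions: for every distinguished triangle X → Y → Z → X[1] in 𝒟, if X ∈ 𝒟_υ^{≤0} and Y ∈ 𝒟_υ^{≤0} then Z ∈ 𝒟_υ^{≤0}, and if X ∈ 𝒟_υ^{≤0} and Z ∈ 𝒟_υ^{≤0} then Y ∈ 𝒟_υ^{≤0}. -/

import Mathlib

open CategoryTheory CategoryTheory.Limits CategoryTheory.Pretriangulated

universe v u

variable (C : Type u) [Category.{v} C] [HasZeroObject C] [Preadditive C] [HasShift C ℤ]
  [∀ n : ℤ, (shiftFunctor C n).Additive] [Pretriangulated C]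

/-- A t-structure on a pretriangulated category `C`, given by the two isomorphism-closed
classes `le` (the objects of `𝒟^{≤0}`) and `ge` (the objects of `𝒟^{≥0}`).  With the
convention that `X ∈ 𝒟^{≤n} ↔ le (X⟦n⟧)` and `X ∈ 𝒟^{≥n} ↔ ge (X⟦n⟧)`, the axioms read:
`𝒟^{≤-1} ⊆ 𝒟^{≤0}` (equivalently `𝒟^{≤0}[1] ⊆ 𝒟^{≤0}`), `𝒟^{≥1} ⊆ 𝒟^{≥0}` (equivalently
`𝒟^{≥0}[-1] ⊆ 𝒟^{≥0}`), `Hom(X, Y) = 0` for `X ∈ 𝒟^{≤0}` and `Y ∈ 𝒟^{≥1}`, and every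
object sits in a distinguished triangle `A → X → B → A[1]` with `A ∈ 𝒟^{≤0}`,
`B ∈ 𝒟^{≥1}`. -/
structure TStruct where
  /-- the class `𝒟^{≤0}` -/
  le : C → Prop
  /-- the class `𝒟^{≥0}` -/
  ge : C → Prop
  le_iso_closed : ∀ {X Y : C}, (X ≅ Y) → le X → le Y
  ge_iso_closed : ∀ {X Y : C}, (X ≅ Y) → ge X → ge Y
  le_shift : ∀ X : C, le X → le (X⟦(1 : ℤ)⟧)
  ge_shift : ∀ X : C, ge X → ge (X⟦(-1 : ℤ)⟧)
  hom_vanish : ∀ {X Y : C}, le X → ge (Y⟦(1 : ℤ)⟧) → ∀ f : X ⟶ Y, f = 0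
  exists_triangle : ∀ X : C, ∃ (A B : C) (f : A ⟶ X) (g : X ⟶ B) (h : B ⟶ A⟦(1 : ℤ)⟧),
    (Triangle.mk f g h ∈ distTriang C) ∧ le A ∧ ge (B⟦(1 : ℤ)⟧)

variable {C}

/-- The heart `𝒟^♥ = 𝒟^{≤0} ∩ 𝒟^{≥0}` of a t-structure. -/
def TStruct.heart (t : TStruct C) (X : C) : Prop := t.le X ∧ t.ge X

/-- A torsion pair `(𝒯, ℱ)` on the heart of a t-structure: two isomorphism-closed classes
of objects of the heart such that `Hom(T, F) = 0` for `T ∈ 𝒯`, `F ∈ ℱ`, and every object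
of the heart sits in a distinguished triangle `T → X → F → T[1]` with `T ∈ 𝒯`, `F ∈ ℱ`
(i.e. a short exact sequence `0 → T → X → F → 0` in the heart). -/
structure HeartTorsionPair (t : TStruct C) where
  /-- the torsion class -/
  torsion : C → Prop
  /-- the torsion-free class -/
  free : C → Prop
  torsion_mem_heart : ∀ X : C, torsion X → t.heart X
  free_mem_heart : ∀ X : C, free X → t.heart X
  torsion_iso_closed : ∀ {X Y : C}, (X ≅ Y) → torsion X → torsion Y
  free_iso_closed : ∀ {X Y : C}, (X ≅ Y) → free X → free Y
  hom_vanish : ∀ {T F : C}, torsion T → free F → ∀ f : T ⟶ F, f = 0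
  exists_triangle : ∀ X : C, t.heart X →
    ∃ (T F : C) (f : T ⟶ X) (g : X ⟶ F) (h : F ⟶ T⟦(1 : ℤ)⟧),
      (Triangle.mk f g h ∈ distTriang C) ∧ torsion T ∧ free F

/-- The connective part `𝒟_υ^{≤0}` of the tilting of a t-structure `t` with respect to a
torsion class `torsion` on its heart: those `X ∈ 𝒟^{≤0}` fitting in a distinguished
triangle `A → X → T → A[1]` with `A ∈ 𝒟^{≤-1}` and `T` torsion. -/
def TiltLE (t : TStruct C) (torsion : C → Prop) (X : C) : Prop :=
  t.le X ∧ ∃ (A T : C) (f : A ⟶ X) (g : X ⟶ T) (h : T ⟶ A⟦(1 : ℤ)⟧),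
    (Triangle.mk f g h ∈ distTriang C) ∧ t.le (A⟦(-1 : ℤ)⟧) ∧ torsion T

/-- The coconnective part `𝒟_υ^{≥0}` of the tilting of a t-structure `t` with respect to a
torsion-free class `free` on its heart: those `X ∈ 𝒟^{≥-1}` fitting in a distinguished
triangle `F[1] → X → B → F[2]` with `F` torsion-free and `B ∈ 𝒟^{≥0}`. -/
def TiltGE (t : TStruct C) (free : C → Prop) (X : C) : Prop :=
  t.ge (X⟦(-1 : ℤ)⟧) ∧ ∃ (F B : C) (f : F⟦(1 : ℤ)⟧ ⟶ X) (g : X ⟶ B)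
    (h : B ⟶ (F⟦(1 : ℤ)⟧)⟦(1 : ℤ)⟧),
    (Triangle.mk f g h ∈ distTriang C) ∧ free F ∧ t.ge B
section Aux

variable {C : Type u} [Category.{v} C] [HasZeroObject C] [Preadditive C] [HasShift C ℤ]
  [∀ n : ℤ, (shiftFunctor C n).Additive] [Pretriangulated C]

/-- Hom vanishing with a shift: `Hom(X[1], Y) = 0` when `X ∈ 𝒟^{≤0}`, `Y ∈ 𝒟^{≥0}`. -/
lemma TStruct.shift_hom_vanish (t : TStruct C) {X Y : C} (hX : t.le X) (hY : t.ge Y)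
    (φ : X⟦(1 : ℤ)⟧ ⟶ Y) : φ = 0 := by
  have hY' : t.ge ((Y⟦(-1 : ℤ)⟧)⟦(1 : ℤ)⟧) :=
    t.ge_iso_closed ((shiftEquiv C (1 : ℤ)).counitIso.symm.app Y) hY
  have hψ : (shiftEquiv C (1 : ℤ)).unitIso.hom.app X ≫ φ⟦(-1 : ℤ)⟧' = 0 :=
    t.hom_vanish hX hY' _
  apply (shiftFunctor C (-1 : ℤ)).map_injective
  rw [Functor.map_zero]
  refine (cancel_epi ((shiftEquiv C (1 : ℤ)).unitIso.hom.app X)).1 ?_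
  exact hψ.trans comp_zero.symm

lemma TStruct.le_of_le_shift_neg (t : TStruct C) {A : C} (hA : t.le (A⟦(-1 : ℤ)⟧)) :
    t.le A :=
  t.le_iso_closed ((shiftEquiv C (1 : ℤ)).counitIso.app A) (t.le_shift _ hA)

/-- Hom vanishing `Hom(A, F) = 0` when `A ∈ 𝒟^{≤-1}` and `F ∈ 𝒟^{≥0}`. -/
lemma TStruct.hom_vanish' (t : TStruct C) {A F : C} (hA : t.le (A⟦(-1 : ℤ)⟧))
    (hF : t.ge F) (φ : A ⟶ F) : φ = 0 := by
  have h0 : ((shiftEquiv C (1 : ℤ)).counitIso.app A).hom ≫ φ = 0 :=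
    t.shift_hom_vanish hA hF _
  calc φ = ((shiftEquiv C (1 : ℤ)).counitIso.app A).inv ≫
      (((shiftEquiv C (1 : ℤ)).counitIso.app A).hom ≫ φ) := by simp
    _ = 0 := by rw [h0, comp_zero]

/-- An object all of whose maps to the coaisle vanish lies in the aisle. -/
lemma TStruct.le_of_vanish (t : TStruct C) {X : C}
    (hv : ∀ W : C, t.ge (W⟦(1 : ℤ)⟧) → ∀ φ : X ⟶ W, φ = 0) : t.le X := by
  obtain ⟨A, B, f, g, h, hdt, hA, hB⟩ := t.exists_triangle X
  have hg : g = 0 := hv B hB g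
  obtain ⟨k, hk⟩ := Triangle.yoneda_exact₃ _ hdt (𝟙 B)
    (by exact (Category.comp_id _).trans hg)
  have hk0 : k = 0 := t.hom_vanish (t.le_shift _ hA) hB k
  have hBzero : IsZero B := by
    rw [IsZero.iff_id_eq_zero, hk, hk0]; exact comp_zero
  have : IsIso f := (Triangle.isZero₃_iff_isIso₁ _ hdt).1 hBzero
  exact t.le_iso_closed (asIso f) hA

/-- The aisle is closed under cofibers. -/
lemma TStruct.le_cofiber (t : TStruct C) {U V W : C} {f : U ⟶ V} {g : V ⟶ W}
    {h : W ⟶ U⟦(1 : ℤ)⟧} (hdt : Triangle.mk f g h ∈ distTriang C)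
    (hU : t.le U) (hV : t.le V) : t.le W := by
  apply t.le_of_vanish
  intro W₀ hW₀ φ
  obtain ⟨ψ, hψ⟩ := Triangle.yoneda_exact₃ _ hdt φ (t.hom_vanish hV hW₀ _)
  rw [hψ, t.hom_vanish (t.le_shift _ hU) hW₀ ψ]; exact comp_zero

/-- The aisle is closed under extensions. -/
lemma TStruct.le_ext (t : TStruct C) {U V W : C} {f : U ⟶ V} {g : V ⟶ W}
    {h : W ⟶ U⟦(1 : ℤ)⟧} (hdt : Triangle.mk f g h ∈ distTriang C)
    (hU : t.le U) (hW : t.le W) : t.le V := by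
  apply t.le_of_vanish
  intro W₀ hW₀ φ
  obtain ⟨ψ, hψ⟩ := Triangle.yoneda_exact₂ _ hdt φ (t.hom_vanish hU hW₀ _)
  rw [hψ, t.hom_vanish hW hW₀ ψ]; exact comp_zero

/-- Every object sits in a triangle `A → X → B → A[1]` with `A ∈ 𝒟^{≤-1}`, `B ∈ 𝒟^{≥0}`. -/
lemma TStruct.exists_triangle' (t : TStruct C) (X : C) :
    ∃ (A B : C) (f : A ⟶ X) (g : X ⟶ B) (h : B ⟶ A⟦(1 : ℤ)⟧),
      (Triangle.mk f g h ∈ distTriang C) ∧ t.le (A⟦(-1 : ℤ)⟧) ∧ t.ge B := by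
  obtain ⟨A', B', a, b, c, hdt, hA', hB'⟩ := t.exists_triangle (X⟦(-1 : ℤ)⟧)
  refine ⟨A'⟦(1 : ℤ)⟧, B'⟦(1 : ℤ)⟧,
    ((Triangle.shiftFunctor C 1).obj (Triangle.mk a b c)).mor₁ ≫
      ((shiftEquiv C (1 : ℤ)).counitIso.app X).hom,
    ((shiftEquiv C (1 : ℤ)).counitIso.app X).inv ≫
      ((Triangle.shiftFunctor C 1).obj (Triangle.mk a b c)).mor₂,
    ((Triangle.shiftFunctor C 1).obj (Triangle.mk a b c)).mor₃,
    ?_, t.le_iso_closed ((shiftEquiv C (1 : ℤ)).unitIso.app A') hA', hB'⟩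
  refine isomorphic_distinguished _ (Triangle.shift_distinguished _ hdt 1) _ ?_
  refine Triangle.isoMk _ _ (Iso.refl _) ((shiftEquiv C (1 : ℤ)).counitIso.app X).symm
    (Iso.refl _) ?_ ?_ ?_ <;> simp [Triangle.mk, Triangle.shiftFunctor]
  · exact (Category.assoc _ _ _).trans ((congrArg (_ ≫ ·)
      ((shiftEquiv C (1 : ℤ)).counitIso.app X).hom_inv_id).trans (Category.comp_id _))
  · rfl

/-- Characterization of the tilted aisle by Hom-vanishing into the torsion-free class. -/
lemma tiltLE_iff (t : TStruct C) (tp : HeartTorsionPair t) (X : C) :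
    TiltLE t tp.torsion X ↔
      (t.le X ∧ ∀ F : C, tp.free F → ∀ φ : X ⟶ F, φ = 0) := by
  constructor
  · rintro ⟨hle, A, T, f, g, h, hdt, hA, hTor⟩
    refine ⟨hle, fun F hF φ => ?_⟩
    have hgeF : t.ge F := (tp.free_mem_heart F hF).2
    obtain ⟨ψ, hψ⟩ := Triangle.yoneda_exact₂ _ hdt φ (t.hom_vanish' hA hgeF _)
    rw [hψ, tp.hom_vanish hTor hF ψ]; exact comp_zero
  · rintro ⟨hle, hvan⟩
    obtain ⟨A, B, f, g, h, hTr, hA, hgeB⟩ := t.exists_triangle' X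
    have hleA : t.le A := t.le_of_le_shift_neg hA
    have hleB : t.le B := t.le_cofiber hTr hleA hle
    obtain ⟨T', F', p, q, r, hdt', hT', hF'⟩ := tp.exists_triangle B ⟨hleB, hgeB⟩
    have hgeF' : t.ge F' := (tp.free_mem_heart F' hF').2
    have hq0 : g ≫ q = 0 := hvan F' hF' _
    have hq : q = 0 := by
      obtain ⟨k, hk⟩ := Triangle.yoneda_exact₃ _ hTr q hq0
      rw [hk, t.shift_hom_vanish hleA hgeF' k]; exact comp_zero
    have hF'zero : IsZero F' := by
      obtain ⟨k, hk⟩ := Triangle.yoneda_exact₃ _ hdt' (𝟙 F') (by exact (Category.comp_id _).trans hq)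
      rw [IsZero.iff_id_eq_zero, hk,
        t.shift_hom_vanish (tp.torsion_mem_heart T' hT').1 hgeF' k]; exact comp_zero
    have : IsIso p := (Triangle.isZero₃_iff_isIso₁ _ hdt').1 hF'zero
    have hTorB : tp.torsion B := tp.torsion_iso_closed (asIso p) hT'
    exact ⟨hle, A, B, f, g, h, hTr, hA, hTorB⟩

end Aux

/-- The tilted class `𝒟_υ^{≤0}` is closed under cofibers and extensions: for every
distinguished triangle `X → Y → Z → X[1]`, if `X, Y ∈ 𝒟_υ^{≤0}` then `Z ∈ 𝒟_υ^{≤0}`, and if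
`X, Z ∈ 𝒟_υ^{≤0}` then `Y ∈ 𝒟_υ^{≤0}`. -/
theorem tiltLE_closed_under_cofibers_and_extensions
    (t : TStruct C) (tp : HeartTorsionPair t)
    {X Y Z : C} (f : X ⟶ Y) (g : Y ⟶ Z) (h : Z ⟶ X⟦(1 : ℤ)⟧)
    (hT : Triangle.mk f g h ∈ distTriang C) :
    (TiltLE t tp.torsion X → TiltLE t tp.torsion Y → TiltLE t tp.torsion Z) ∧
    (TiltLE t tp.torsion X → TiltLE t tp.torsion Z → TiltLE t tp.torsion Y) := by
  simp only [tiltLE_iff t tp]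
  constructor
  · rintro ⟨hleX, hvX⟩ ⟨hleY, hvY⟩
    refine ⟨t.le_cofiber hT hleX hleY, fun F hF φ => ?_⟩
    obtain ⟨ψ, hψ⟩ := Triangle.yoneda_exact₃ _ hT φ (hvY F hF _)
    rw [hψ, t.shift_hom_vanish hleX (tp.free_mem_heart F hF).2 ψ]; exact comp_zero
  · rintro ⟨hleX, hvX⟩ ⟨hleZ, hvZ⟩
    refine ⟨t.le_ext hT hleX hleZ, fun F hF φ => ?_⟩
    obtain ⟨ψ, hψ⟩ := Triangle.yoneda_exact₂ _ hT φ (hvX F hF _)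
    rw [hψ, hvZ F hF ψ]; exact comp_zero
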